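/- (Probabilistic line-segment selection) Let Λ ⊂ R^d be a cube of unit side length, S ⊂ R^d measurable, and y ∈ Λ. Then there exists a direction η ∈ S^{d-1} such that the maximal line segment I = {y + rη : r ≥ 0} ∩ Λ satisfies |S ∩ I| / |I| ≥ |S ∩ Λ| / (σ_{d-1} d^{d/2}), where |S ∩ I| and |I| denote one-dimensional Lebesgue (length) measure along the segment and σ_{d-1} is the surface measure of the unit sphere S^{d-1} ⊂ R^d. -/

import Mathlib

open MeasureTheory Set Metric

lemma aux_polar {E : Type*} [NormedAddCommGroup E] [NormedSpace ℝ E] [MeasurableSpace E]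
    [BorelSpace E] [FiniteDimensional ℝ E] [Nontrivial E] (μ : Measure E) [μ.IsAddHaarMeasure]
    (A : Set E) (hA : MeasurableSet A) (R : ℝ)
    (hAR : ∀ x ∈ A, ‖x‖ ≤ R) :
    μ A ≤ ENNReal.ofReal (R ^ (Module.finrank ℝ E - 1)) *
      ∫⁻ η : sphere (0:E) 1, volume {t : ℝ | 0 < t ∧ t • (η:E) ∈ A} ∂μ.toSphere := by
  set n := Module.finrank ℝ E - 1 with hn
  set B : Set ({0}ᶜ : Set E) := Subtype.val ⁻¹' A with hBdef
  have hBm : MeasurableSet B := measurable_subtype_coe hA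
  set e := homeomorphUnitSphereProd E with he
  set s2 : Set (sphere (0:E) 1 × Ioi (0:ℝ)) := e.symm ⁻¹' B with hs2def
  have hs2 : MeasurableSet s2 := e.symm.measurable hBm
  have step4 : ∀ η : sphere (0:E) 1, Measure.volumeIoiPow n (Prod.mk η ⁻¹' s2) ≤
      ENNReal.ofReal (R ^ n) * volume {t : ℝ | 0 < t ∧ t • (η:E) ∈ A} := by
    intro η
    have hU : MeasurableSet {t : ℝ | t • (η:E) ∈ A} :=
      (continuous_id.smul continuous_const).measurable hA
    have hT : Prod.mk η ⁻¹' s2 = (Subtype.val ⁻¹' {t : ℝ | t • (η:E) ∈ A} : Set (Ioi (0:ℝ))) := by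
      ext t
      simp [hs2def, hBdef, he]
    have hTm : MeasurableSet (Prod.mk η ⁻¹' s2) := by
      rw [hT]; exact measurable_subtype_coe hU
    calc Measure.volumeIoiPow n (Prod.mk η ⁻¹' s2)
        = ∫⁻ t in Prod.mk η ⁻¹' s2, ENNReal.ofReal (t.1 ^ n)
            ∂((volume : Measure ℝ).comap Subtype.val) := by
          rw [Measure.volumeIoiPow, withDensity_apply _ hTm]
      _ ≤ ∫⁻ _ in Prod.mk η ⁻¹' s2, ENNReal.ofReal (R ^ n)
            ∂((volume : Measure ℝ).comap Subtype.val) := by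
          refine setLIntegral_mono' hTm fun t ht => ?_
          rw [hT] at ht
          have ht1 : (t : Ioi (0:ℝ)).1 • (η:E) ∈ A := ht
          have h0t : (0:ℝ) ≤ t.1 := t.2.out.le
          have : ‖t.1 • (η:E)‖ ≤ R := hAR _ ht1
          rw [norm_smul, mem_sphere_zero_iff_norm.mp η.2, mul_one,
            Real.norm_eq_abs, abs_of_nonneg h0t] at this
          exact ENNReal.ofReal_le_ofReal (pow_le_pow_left₀ h0t this n)
      _ = ENNReal.ofReal (R ^ n) * ((volume : Measure ℝ).comap Subtype.val) (Prod.mk η ⁻¹' s2) :=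
          setLIntegral_const _ _
      _ = ENNReal.ofReal (R ^ n) * volume {t : ℝ | 0 < t ∧ t • (η:E) ∈ A} := by
          rw [hT, comap_subtype_coe_apply measurableSet_Ioi]
          have himg : (Subtype.val '' (Subtype.val ⁻¹' {t : ℝ | t • (η:E) ∈ A} : Set (Ioi (0:ℝ))))
              = {t : ℝ | 0 < t ∧ t • (η:E) ∈ A} := by
            ext t
            simp only [Set.mem_image, Set.mem_preimage, Set.mem_setOf_eq, Subtype.exists,
              Set.mem_Ioi, exists_and_left, exists_prop, exists_eq_right_right]
            tauto
          rw [himg]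
  calc μ A = μ (A \ {0}) := (measure_diff_null (measure_singleton 0)).symm
    _ = (μ.comap Subtype.val) B := by
        rw [comap_subtype_coe_apply (measurableSet_singleton (0:E)).compl]
        congr 1
        ext x
        simp [hBdef, Set.mem_diff, and_comm]
    _ = (μ.toSphere.prod (Measure.volumeIoiPow n)) s2 := by
        have hB : B = e ⁻¹' s2 := by
          ext x; simp [hs2def]
        rw [hB]
        exact (Measure.measurePreserving_homeomorphUnitSphereProd μ).measure_preimage
          hs2.nullMeasurableSet
    _ = ∫⁻ η : sphere (0:E) 1, Measure.volumeIoiPow n (Prod.mk η ⁻¹' s2) ∂μ.toSphere :=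
        Measure.prod_apply hs2
    _ ≤ ∫⁻ η : sphere (0:E) 1, ENNReal.ofReal (R ^ n) * volume {t : ℝ | 0 < t ∧ t • (η:E) ∈ A}
          ∂μ.toSphere := lintegral_mono step4
    _ = _ := lintegral_const_mul' _ _ ENNReal.ofReal_ne_top

theorem stmt_5 (d : ℕ) (hd : 1 ≤ d) (r : Fin d → ℝ)
    (S : Set (EuclideanSpace ℝ (Fin d))) (hS : MeasurableSet S)
    (y : EuclideanSpace ℝ (Fin d))
    (hy : y ∈ {x : EuclideanSpace ℝ (Fin d) | ∀ i, x i ∈ Set.Icc (r i) (r i + 1)}) :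
    ∃ η : EuclideanSpace ℝ (Fin d), ‖η‖ = 1 ∧
      ∀ ρ : ℝ,
        IsGreatest {t : ℝ | 0 ≤ t ∧
            y + t • η ∈ {x : EuclideanSpace ℝ (Fin d) | ∀ i, x i ∈ Set.Icc (r i) (r i + 1)}} ρ →
          (volume {t : ℝ | t ∈ Set.Icc 0 ρ ∧ y + t • η ∈ S}).toReal / ρ ≥
            (volume (S ∩ {x : EuclideanSpace ℝ (Fin d) | ∀ i, x i ∈ Set.Icc (r i) (r i + 1)})).toReal /
              ((d * (volume (Metric.ball (0 : EuclideanSpace ℝ (Fin d)) 1)).toReal) *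
                Real.sqrt d ^ d) := by
  classical
  have : Fact (1 ≤ d) := ⟨hd⟩
  haveI : Nontrivial (EuclideanSpace ℝ (Fin d)) := by
    have : 0 < d := hd
    exact ⟨EuclideanSpace.single ⟨0, this⟩ (1:ℝ), 0, by
      intro h
      have := congrArg (fun v => v ⟨0, this⟩) h
      simp [EuclideanSpace.single_apply] at this⟩
  set Λ : Set (EuclideanSpace ℝ (Fin d)) := {x | ∀ i, x i ∈ Set.Icc (r i) (r i + 1)} with hΛdef
  have hΛm : MeasurableSet Λ := by
    have : Λ = ⋂ i, (fun x : EuclideanSpace ℝ (Fin d) => x i) ⁻¹' Set.Icc (r i) (r i + 1) := by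
      ext x; simp [hΛdef]
    rw [this]
    exact MeasurableSet.iInter fun i =>
      (EuclideanSpace.proj i).continuous.measurable measurableSet_Icc
  have hdiam : ∀ x ∈ Λ, dist x y ≤ Real.sqrt d := by
    intro x hx
    rw [EuclideanSpace.dist_eq]
    apply Real.sqrt_le_sqrt
    calc ∑ i, dist (x i) (y i) ^ 2 ≤ ∑ _i : Fin d, (1:ℝ) := by
          refine Finset.sum_le_sum fun i _ => ?_
          have h1 := hx i
          have h2 := hy i
          simp only [Set.mem_Icc] at h1 h2
          rw [Real.dist_eq]
          nlinarith [abs_nonneg (x i - y i), sq_abs (x i - y i),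
            abs_le.mpr (show -(1:ℝ) ≤ x i - y i ∧ x i - y i ≤ 1 by constructor <;> linarith)]
      _ = d := by simp
  by_cases h0 : volume (S ∩ Λ) = 0
  · refine ⟨EuclideanSpace.single ⟨0, hd⟩ (1:ℝ), by simp [EuclideanSpace.norm_single], ?_⟩
    intro ρ hρ
    rw [h0]
    simp only [ENNReal.toReal_zero, zero_div, ge_iff_le]
    exact div_nonneg ENNReal.toReal_nonneg hρ.1.1
  · set A : Set (EuclideanSpace ℝ (Fin d)) := (fun x => y + x) ⁻¹' (S ∩ Λ) with hAdef
    have hAm : MeasurableSet A := (measurable_id.const_add y) (hS.inter hΛm)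
    have hAμ : volume A = volume (S ∩ Λ) := measure_preimage_add volume y (S ∩ Λ)
    have hAR : ∀ x ∈ A, ‖x‖ ≤ Real.sqrt d := by
      intro x hx
      have := hdiam (y + x) hx.2
      rwa [dist_eq_norm, add_sub_cancel_left] at this
    have hΛsub : Λ ⊆ Metric.closedBall y (Real.sqrt d) := fun x hx =>
      Metric.mem_closedBall.mpr (hdiam x hx)
    have hAfin : volume A ≠ ⊤ := by
      rw [hAμ]
      exact ((measure_mono (Set.inter_subset_right.trans hΛsub)).trans_lt
        measure_closedBall_lt_top).ne
    have hA0 : volume A ≠ 0 := by rw [hAμ]; exact h0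
    set σm := (volume : Measure (EuclideanSpace ℝ (Fin d))).toSphere with hσm
    set g : Metric.sphere (0:(EuclideanSpace ℝ (Fin d))) 1 → ENNReal :=
      fun η => volume {t : ℝ | 0 < t ∧ t • (η:(EuclideanSpace ℝ (Fin d))) ∈ A} with hgdef
    have hgm : Measurable g := by
      have hWm : MeasurableSet {p : Metric.sphere (0:(EuclideanSpace ℝ (Fin d))) 1 × ℝ | 0 < p.2 ∧ p.2 • (p.1:(EuclideanSpace ℝ (Fin d))) ∈ A} := by
        refine MeasurableSet.inter ?_ ?_
        · exact measurable_snd measurableSet_Ioi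
        · exact (continuous_snd.smul (continuous_subtype_val.comp continuous_fst)).measurable hAm
      have : g = fun η => volume
          (Prod.mk η ⁻¹' {p : Metric.sphere (0:(EuclideanSpace ℝ (Fin d))) 1 × ℝ | 0 < p.2 ∧ p.2 • (p.1:(EuclideanSpace ℝ (Fin d))) ∈ A}) := rfl
      rw [this]
      exact measurable_measure_prodMk_left hWm
    have hkey := aux_polar (volume : Measure (EuclideanSpace ℝ (Fin d))) A hAm (Real.sqrt d) hAR
    rw [finrank_euclideanSpace_fin] at hkey
    have hσu : σm Set.univ = d * volume (Metric.ball (0:(EuclideanSpace ℝ (Fin d))) 1) := by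
      rw [hσm, Measure.toSphere_apply_univ, finrank_euclideanSpace_fin]
    have hballpos : 0 < volume (Metric.ball (0:(EuclideanSpace ℝ (Fin d))) 1) := measure_ball_pos _ _ one_pos
    have hballfin : volume (Metric.ball (0:(EuclideanSpace ℝ (Fin d))) 1) ≠ ⊤ := measure_ball_lt_top.ne
    have hσ0 : σm Set.univ ≠ 0 := by
      rw [hσu]
      exact mul_ne_zero (Nat.cast_ne_zero.mpr (by omega)) hballpos.ne'
    have hσfin : σm Set.univ ≠ ⊤ := by
      rw [hσu]; exact ENNReal.mul_ne_top (ENNReal.natCast_ne_top d) hballfin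
    have hs1 : (1:ℝ) ≤ Real.sqrt d := by
      rw [show (1:ℝ) = Real.sqrt 1 by simp]
      exact Real.sqrt_le_sqrt (by exact_mod_cast hd)
    have hspos : (0:ℝ) < Real.sqrt d := lt_of_lt_of_le one_pos hs1
    set Rn := ENNReal.ofReal (Real.sqrt d ^ (d-1)) with hRn
    have hRn0 : Rn ≠ 0 := by
      rw [hRn]
      simp only [ne_eq, ENNReal.ofReal_eq_zero, not_le]
      positivity
    have hRnfin : Rn ≠ ⊤ := ENNReal.ofReal_ne_top
    set C := Rn * σm Set.univ with hC
    have hC0 : C ≠ 0 := mul_ne_zero hRn0 hσ0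
    have hCfin : C ≠ ⊤ := ENNReal.mul_ne_top hRnfin hσfin
    set a := volume A / C with ha
    have ha0 : a ≠ 0 := (ENNReal.div_pos hA0 hCfin).ne'
    have hAaC : volume A = a * C := (ENNReal.div_mul_cancel hC0 hCfin).symm
    have hgle : ∀ η, g η ≤ ENNReal.ofReal (Real.sqrt d) := by
      intro η
      refine (measure_mono (fun t ht => ?_)).trans_eq (by rw [Real.volume_Ioc, sub_zero])
      have h1 : ‖t • (η:(EuclideanSpace ℝ (Fin d)))‖ ≤ Real.sqrt d := hAR _ ht.2
      rw [norm_smul, mem_sphere_zero_iff_norm.mp η.2, mul_one, Real.norm_eq_abs,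
        abs_of_nonneg ht.1.le] at h1
      exact ⟨ht.1, h1⟩
    have hIfin : ∫⁻ η, g η ∂σm ≠ ⊤ := by
      refine ((lintegral_mono hgle).trans_eq (lintegral_const _)).trans_lt ?_ |>.ne
      exact ENNReal.mul_lt_top ENNReal.ofReal_lt_top hσfin.lt_top
    have hsel : ∃ η, a ≤ g η := by
      by_contra hcon
      push_neg at hcon
      have hle : ∀ η, g η ≤ a := fun η => (hcon η).le
      have hI_le : ∫⁻ η, g η ∂σm ≤ a * σm Set.univ :=
        (lintegral_mono hle).trans_eq (lintegral_const a)
      have hI_ge : a * σm Set.univ ≤ ∫⁻ η, g η ∂σm := by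
        rw [hAaC, hC] at hkey
        rw [show a * (Rn * σm Set.univ) = Rn * (a * σm Set.univ) by ring] at hkey
        exact (ENNReal.mul_le_mul_iff_right hRn0 hRnfin).mp hkey
      have heq : ∫⁻ η, g η ∂σm = a * σm Set.univ := le_antisymm hI_le hI_ge
      have hsub0 : ∫⁻ η, (a - g η) ∂σm = 0 := by
        rw [lintegral_sub hgm hIfin (ae_of_all _ hle), lintegral_const, heq, tsub_self]
      have hae := (lintegral_eq_zero_iff (measurable_const.sub hgm)).mp hsub0
      have hne : (ae σm).NeBot := ae_neBot.mpr (fun h => hσ0 (by simp [h]))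
      obtain ⟨η, hη⟩ := hae.exists
      exact absurd (tsub_eq_zero_iff_le.mp hη) (not_le.mpr (hcon η))
    obtain ⟨η, hη⟩ := hsel
    refine ⟨(η : (EuclideanSpace ℝ (Fin d))), mem_sphere_zero_iff_norm.mp η.2, ?_⟩
    intro ρ hρ
    have hρ0 : (0:ℝ) ≤ ρ := hρ.1.1
    have hρΛ : y + ρ • (η:(EuclideanSpace ℝ (Fin d))) ∈ Λ := hρ.1.2
    have hρs : ρ ≤ Real.sqrt d := by
      have := hdiam _ hρΛ
      rwa [dist_eq_norm, add_sub_cancel_left, norm_smul,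
        mem_sphere_zero_iff_norm.mp η.2, mul_one, Real.norm_eq_abs, abs_of_nonneg hρ0] at this
    set V := volume {t : ℝ | t ∈ Set.Icc 0 ρ ∧ y + t • (η:(EuclideanSpace ℝ (Fin d))) ∈ S} with hVdef
    have hgV : g η ≤ V := by
      refine measure_mono fun t ht => ?_
      have htA : y + t • (η:(EuclideanSpace ℝ (Fin d))) ∈ S ∩ Λ := ht.2
      exact ⟨⟨ht.1.le, hρ.2 ⟨ht.1.le, htA.2⟩⟩, htA.1⟩
    have hVρ : V ≤ ENNReal.ofReal ρ := by
      refine (measure_mono fun t ht => ht.1).trans_eq ?_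
      rw [Real.volume_Icc, sub_zero]
    have hV0 : V ≠ 0 := fun h => ha0 (le_antisymm (h ▸ (hη.trans hgV)) zero_le)
    have hVfin : V ≠ ⊤ := (hVρ.trans_lt ENNReal.ofReal_lt_top).ne
    have hρpos : (0:ℝ) < ρ := by
      rcases lt_or_eq_of_le hρ0 with h | h
      · exact h
      · exfalso; apply hV0
        rw [← h] at hVρ
        simpa using le_antisymm (by simpa using hVρ) zero_le
    have hmain : volume (S ∩ Λ) ≤ Rn * σm Set.univ * V := by
      calc volume (S ∩ Λ) = volume A := hAμ.symm
        _ = a * C := hAaC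
        _ ≤ g η * C := mul_le_mul_left hη C
        _ ≤ V * C := mul_le_mul_left hgV C
        _ = Rn * σm Set.univ * V := by rw [hC]; ring
    have hreal : (volume (S ∩ Λ)).toReal ≤
        Real.sqrt d ^ (d-1) * ((σm Set.univ).toReal * V.toReal) := by
      have h1 := ENNReal.toReal_mono
        (ENNReal.mul_ne_top (ENNReal.mul_ne_top hRnfin hσfin) hVfin) hmain
      rwa [ENNReal.toReal_mul, ENNReal.toReal_mul, hRn,
        ENNReal.toReal_ofReal (by positivity), mul_assoc] at h1
    have hσr : (σm Set.univ).toReal = d * (volume (Metric.ball (0:(EuclideanSpace ℝ (Fin d))) 1)).toReal := by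
      rw [hσu, ENNReal.toReal_mul, ENNReal.toReal_natCast]
    have hσrpos : (0:ℝ) < (σm Set.univ).toReal := ENNReal.toReal_pos hσ0 hσfin
    have hpow : Real.sqrt d ^ (d-1) * Real.sqrt d = Real.sqrt d ^ d := by
      rw [← pow_succ, Nat.sub_add_cancel hd]
    rw [ge_iff_le, ← hσr, div_le_div_iff₀ (by positivity) hρpos]
    calc (volume (S ∩ Λ)).toReal * ρ ≤ (volume (S ∩ Λ)).toReal * Real.sqrt d :=
          mul_le_mul_of_nonneg_left hρs ENNReal.toReal_nonneg
      _ ≤ (Real.sqrt d ^ (d-1) * ((σm Set.univ).toReal * V.toReal)) * Real.sqrt d :=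
          mul_le_mul_of_nonneg_right hreal hspos.le
      _ = V.toReal * ((σm Set.univ).toReal * Real.sqrt d ^ d) := by rw [← hpow]; ring
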